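/- arXiv:1703.01509 — 5 statements merged into one kernel-verified Lean document; each statement's English description precedes it below -/
import Mathlib

section
/- If S : [0,T] → S^n is differentiable and satisfies -Ṡ(τ) + AᵀS(τ) + S(τ)A ⪯ 0 for all τ ∈ [0,T], then for every θ ∈ [0,T] one has e^{Aᵀθ} S(0) e^{Aθ} ⪯ S(θ). -/
open Matrix NormedSpace Set

namespace Stmt0Aux

variable {n : ℕ}

/-- Evaluation of a matrix at an entry, as a linear map. -/
def entryLM (i j : Fin n) : Matrix (Fin n) (Fin n) ℝ →ₗ[ℝ] ℝ where
  toFun M := M i j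
  map_add' _ _ := rfl
  map_smul' _ _ := rfl

/-- The quadratic form `M ↦ xᵀ M x` as a linear map in `M`. -/
def quadLM (x : Fin n → ℝ) : Matrix (Fin n) (Fin n) ℝ →ₗ[ℝ] ℝ where
  toFun M := x ⬝ᵥ (M *ᵥ x)
  map_add' M N := by simp [Matrix.add_mulVec, dotProduct_add]
  map_smul' c M := by simp [Matrix.smul_mulVec, dotProduct_smul]

section LinftyOp

attribute [local instance] Matrix.linftyOpNormedRing Matrix.linftyOpNormedAlgebra

theorem aux (T : ℝ) (A : Matrix (Fin n) (Fin n) ℝ)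
    (S S' : ℝ → Matrix (Fin n) (Fin n) ℝ)
    (hd : ∀ τ ∈ Icc (0 : ℝ) T, ∀ i j, HasDerivAt (fun t => S t i j) (S' τ i j) τ)
    (hsymm : ∀ τ ∈ Icc (0 : ℝ) T, (S τ).IsHermitian)
    (hLMI : ∀ τ ∈ Icc (0 : ℝ) T,
      (-( -(S' τ) + Aᵀ * S τ + S τ * A)).PosSemidef)
    (θ : ℝ) (hθ : θ ∈ Icc (0 : ℝ) T) :
    (S θ - NormedSpace.exp (θ • Aᵀ) * S 0 * NormedSpace.exp (θ • A)).PosSemidef := by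
  have hsub : Icc (0 : ℝ) θ ⊆ Icc 0 T := Icc_subset_Icc le_rfl hθ.2
  -- conjTranspose = transpose over ℝ, and exp of transpose
  have hct : ∀ (M : Matrix (Fin n) (Fin n) ℝ), Mᴴ = Mᵀ := fun M => by
    ext i j; simp [conjTranspose_apply]
  have hexpT : ∀ t : ℝ, NormedSpace.exp (t • Aᵀ) = (NormedSpace.exp (t • A))ᴴ := fun t => by
    rw [hct, ← Matrix.exp_transpose, transpose_smul]
  -- matrix-valued derivative of S
  have hS : ∀ τ ∈ Icc (0 : ℝ) T, HasDerivAt S (S' τ) τ := by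
    intro τ hτ
    have h1 : ∀ M : Matrix (Fin n) (Fin n) ℝ,
        M = ∑ p : Fin n × Fin n, M p.1 p.2 • Matrix.single p.1 p.2 (1 : ℝ) := by
      intro M
      conv_lhs => rw [matrix_eq_sum_single M]
      rw [← Finset.sum_product']
      simp [smul_single, smul_eq_mul]
    have h2 : HasDerivAt
        (fun t => ∑ p : Fin n × Fin n, S t p.1 p.2 • Matrix.single p.1 p.2 (1 : ℝ))
        (∑ p : Fin n × Fin n, S' τ p.1 p.2 • Matrix.single p.1 p.2 (1 : ℝ)) τ :=
      HasDerivAt.fun_sum fun p _ => (hd τ hτ p.1 p.2).smul_const _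
    have h3 := h2.congr_of_eventuallyEq (Filter.Eventually.of_forall fun t => h1 (S t))
    rwa [← h1 (S' τ)] at h3
  -- derivative of `t ↦ exp ((θ - t) • B)`
  have hE : ∀ (B : Matrix (Fin n) (Fin n) ℝ) (τ : ℝ),
      HasDerivAt (fun t => NormedSpace.exp ((θ - t) • B)) (-(B * NormedSpace.exp ((θ - τ) • B))) τ := by
    intro B τ
    have h1 : HasDerivAt (fun u : ℝ => NormedSpace.exp (u • B)) (B * NormedSpace.exp ((θ - τ) • B)) (θ - τ) :=
      hasDerivAt_exp_smul_const' B (θ - τ)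
    have h2 : HasDerivAt (fun t : ℝ => θ - t) (-1) τ := by
      simpa using (hasDerivAt_id τ).const_sub θ
    have h3 := h1.scomp τ h2
    simp only [neg_smul, one_smul, Function.comp_def] at h3; exact h3
  -- commuting of B with exp (t • B)
  have hcomm : ∀ (B : Matrix (Fin n) (Fin n) ℝ) (t : ℝ),
      B * NormedSpace.exp (t • B) = NormedSpace.exp (t • B) * B := fun B t =>
    (((Commute.refl B).smul_right t).exp_right).eq
  refine posSemidef_iff_dotProduct_mulVec.mpr ⟨?_, ?_⟩
  · -- Hermitian part
    refine ((hsymm θ hθ).sub ?_)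
    rw [hexpT]
    exact isHermitian_conjTranspose_mul_mul _ (hsymm 0 ⟨le_rfl, le_trans hθ.1 hθ.2⟩)
  · intro x
    set g : ℝ → ℝ :=
      fun t => quadLM x (NormedSpace.exp ((θ - t) • Aᵀ) * S t * NormedSpace.exp ((θ - t) • A)) with hgdef
    have hg : ∀ τ ∈ Icc (0 : ℝ) T, HasDerivAt g
        (quadLM x (NormedSpace.exp ((θ - τ) • Aᵀ) * (S' τ - Aᵀ * S τ - S τ * A)
          * NormedSpace.exp ((θ - τ) • A))) τ := by
      intro τ hτ
      have hM := ((hE Aᵀ τ).mul (hS τ hτ)).mul (hE A τ)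
      have heq : (-(Aᵀ * NormedSpace.exp ((θ - τ) • Aᵀ)) * S τ + NormedSpace.exp ((θ - τ) • Aᵀ) * S' τ)
            * NormedSpace.exp ((θ - τ) • A)
            + NormedSpace.exp ((θ - τ) • Aᵀ) * S τ * -(A * NormedSpace.exp ((θ - τ) • A))
          = NormedSpace.exp ((θ - τ) • Aᵀ) * (S' τ - Aᵀ * S τ - S τ * A) * NormedSpace.exp ((θ - τ) • A) := by
        rw [hcomm Aᵀ]
        noncomm_ring
      simp only [Pi.mul_apply] at hM; rw [heq] at hM
      exact ((quadLM x).toContinuousLinearMap.hasFDerivAt).comp_hasDerivAt τ hM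
    have hg' : ∀ τ ∈ Icc (0 : ℝ) θ,
        0 ≤ quadLM x (NormedSpace.exp ((θ - τ) • Aᵀ) * (S' τ - Aᵀ * S τ - S τ * A)
          * NormedSpace.exp ((θ - τ) • A)) := by
      intro τ hτ
      have h1 := hLMI τ (hsub hτ)
      have h2 : (-( -(S' τ) + Aᵀ * S τ + S τ * A)) = S' τ - Aᵀ * S τ - S τ * A := by abel
      rw [h2] at h1
      have h4 := h1.conjTranspose_mul_mul_same (NormedSpace.exp ((θ - τ) • A))
      rw [← hexpT] at h4
      have h5 := h4.dotProduct_mulVec_nonneg x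
      simpa [quadLM] using h5
    have hcont : ContinuousOn g (Icc 0 θ) := fun τ hτ =>
      ((hg τ (hsub hτ)).continuousAt).continuousWithinAt
    have hdiff : DifferentiableOn ℝ g (interior (Icc 0 θ)) := fun τ hτ =>
      ((hg τ (hsub (interior_subset hτ))).differentiableAt).differentiableWithinAt
    have hmono : MonotoneOn g (Icc 0 θ) := by
      refine monotoneOn_of_deriv_nonneg (convex_Icc 0 θ) hcont hdiff fun τ hτ => ?_
      rw [(hg τ (hsub (interior_subset hτ))).deriv]
      exact hg' τ (interior_subset hτ)
    have key : g 0 ≤ g θ := hmono ⟨le_rfl, hθ.1⟩ ⟨hθ.1, le_rfl⟩ hθ.1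
    have e0 : g θ = x ⬝ᵥ (S θ *ᵥ x) := by
      simp [hgdef, quadLM, sub_self, zero_smul, exp_zero]
    have e1 : g 0 = x ⬝ᵥ ((NormedSpace.exp (θ • Aᵀ) * S 0 * NormedSpace.exp (θ • A)) *ᵥ x) := by
      simp [hgdef, quadLM]
    rw [e0, e1] at key
    simpa [sub_mulVec, dotProduct_sub, sub_nonneg] using key

end LinftyOp

end Stmt0Aux

attribute [local instance] Matrix.normedAddCommGroup Matrix.normedSpace

/-- If `S : [0,T] → 𝕊ⁿ` is differentiable and satisfies
`-Ṡ(τ) + AᵀS(τ) + S(τ)A ⪯ 0` on `[0,T]`, then for every `θ ∈ [0,T]`,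
`e^{Aᵀθ} S(0) e^{Aθ} ⪯ S(θ)`. -/
theorem stmt0 {n : ℕ} (T : ℝ) (hT : 0 ≤ T)
    (A : Matrix (Fin n) (Fin n) ℝ)
    (S S' : ℝ → Matrix (Fin n) (Fin n) ℝ)
    (hderiv : ∀ τ ∈ Icc (0 : ℝ) T, HasDerivAt S (S' τ) τ)
    (hsymm : ∀ τ ∈ Icc (0 : ℝ) T, (S τ).IsHermitian)
    (hLMI : ∀ τ ∈ Icc (0 : ℝ) T,
      (-( -(S' τ) + Aᵀ * S τ + S τ * A)).PosSemidef) :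
    ∀ θ ∈ Icc (0 : ℝ) T,
      (S θ - NormedSpace.exp (θ • Aᵀ) * S 0 * NormedSpace.exp (θ • A)).PosSemidef := by
  intro θ hθ
  refine Stmt0Aux.aux T A S S' ?_ hsymm hLMI θ hθ
  intro τ hτ i j
  exact ((Stmt0Aux.entryLM i j).toContinuousLinearMap.hasFDerivAt).comp_hasDerivAt τ
    (hderiv τ hτ)
end

section
/- If S : [0,T] → S^n is differentiable and satisfies Ṡ(τ) + S(τ)Aᵀ + A S(τ) ⪯ 0 for all τ ∈ [0,T], then for every θ ∈ [0,T] one has e^{Aθ} S(θ) e^{Aᵀθ} ⪯ S(0). -/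
open Matrix NormedSpace Set

section auxLinfty

attribute [local instance] Matrix.linftyOpSemiNormedRing Matrix.linftyOpNormedRing
  Matrix.linftyOpNormedAlgebra

lemma aux_expEntryDeriv {n : ℕ} (A : Matrix (Fin n) (Fin n) ℝ) (t : ℝ) (i j : Fin n) :
    HasDerivAt (fun τ : ℝ => NormedSpace.exp (τ • A) i j) ((A * NormedSpace.exp (t • A)) i j) t := by
  have h := hasDerivAt_exp_smul_const' (𝕂 := ℝ) A t
  let l : Matrix (Fin n) (Fin n) ℝ →ₗ[ℝ] ℝ :=
    { toFun := fun M => M i j, map_add' := fun _ _ => rfl, map_smul' := fun _ _ => rfl }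
  exact l.toContinuousLinearMap.hasFDerivAt.comp_hasDerivAt t h

lemma aux_expComm {n : ℕ} (A : Matrix (Fin n) (Fin n) ℝ) (t : ℝ) :
    A * NormedSpace.exp (t • A) = NormedSpace.exp (t • A) * A :=
  (hasDerivAt_exp_smul_const' (𝕂 := ℝ) A t).unique (hasDerivAt_exp_smul_const (𝕂 := ℝ) A t)

end auxLinfty

attribute [local instance] Matrix.normedAddCommGroup Matrix.normedSpace

section auxSup

variable {n : ℕ}

lemma aux_hasDerivAt_matrix {f : ℝ → Matrix (Fin n) (Fin n) ℝ}
    {f' : Matrix (Fin n) (Fin n) ℝ} {t : ℝ} :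
    HasDerivAt f f' t ↔ ∀ i j, HasDerivAt (fun τ => f τ i j) (f' i j) t := by
  constructor
  · intro h i j
    let l : Matrix (Fin n) (Fin n) ℝ →ₗ[ℝ] ℝ :=
      { toFun := fun M => M i j, map_add' := fun _ _ => rfl, map_smul' := fun _ _ => rfl }
    exact l.toContinuousLinearMap.hasFDerivAt.comp_hasDerivAt t h
  · intro h
    refine hasDerivAt_pi.2 ?_
    intro i
    refine hasDerivAt_pi.2 ?_
    exact h i

lemma aux_matMul {f g : ℝ → Matrix (Fin n) (Fin n) ℝ} {f' g' : Matrix (Fin n) (Fin n) ℝ} {t : ℝ}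
    (hf : HasDerivAt f f' t) (hg : HasDerivAt g g' t) :
    HasDerivAt (fun τ => f τ * g τ) (f' * g t + f t * g') t := by
  rw [aux_hasDerivAt_matrix] at hf hg ⊢
  intro i j
  simp only [Matrix.mul_apply, Matrix.add_apply]
  rw [← Finset.sum_add_distrib]
  exact HasDerivAt.fun_sum fun k _ => (hf i k).mul (hg k j)

lemma aux_transpose {f : ℝ → Matrix (Fin n) (Fin n) ℝ} {f' : Matrix (Fin n) (Fin n) ℝ} {t : ℝ}
    (hf : HasDerivAt f f' t) :
    HasDerivAt (fun τ => (f τ)ᵀ) f'ᵀ t := by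
  rw [aux_hasDerivAt_matrix] at hf ⊢
  intro i j
  exact hf j i

lemma aux_quad {f : ℝ → Matrix (Fin n) (Fin n) ℝ} {f' : Matrix (Fin n) (Fin n) ℝ} {t : ℝ}
    (hf : HasDerivAt f f' t) (x : Fin n → ℝ) :
    HasDerivAt (fun τ => x ⬝ᵥ (f τ) *ᵥ x) (x ⬝ᵥ f' *ᵥ x) t := by
  rw [aux_hasDerivAt_matrix] at hf
  simp only [dotProduct, Matrix.mulVec]
  apply HasDerivAt.fun_sum
  intro i _
  exact (HasDerivAt.fun_sum fun j _ => (hf i j).mul_const (x j)).const_mul (x i)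

end auxSup

/-- If `S : [0,T] → 𝕊ⁿ` is differentiable and satisfies
`Ṡ(τ) + S(τ)Aᵀ + A S(τ) ⪯ 0` on `[0,T]`, then for every `θ ∈ [0,T]`,
`e^{Aθ} S(θ) e^{Aᵀθ} ⪯ S(0)`. -/
theorem stmt1 {n : ℕ} (T : ℝ) (hT : 0 ≤ T)
    (A : Matrix (Fin n) (Fin n) ℝ)
    (S S' : ℝ → Matrix (Fin n) (Fin n) ℝ)
    (hderiv : ∀ τ ∈ Icc (0 : ℝ) T, HasDerivAt S (S' τ) τ)
    (hsymm : ∀ τ ∈ Icc (0 : ℝ) T, (S τ).IsHermitian)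
    (hLMI : ∀ τ ∈ Icc (0 : ℝ) T,
      (-(S' τ + S τ * Aᵀ + A * S τ)).PosSemidef) :
    ∀ θ ∈ Icc (0 : ℝ) T,
      (S 0 - NormedSpace.exp (θ • A) * S θ * NormedSpace.exp (θ • Aᵀ)).PosSemidef := by
  intro θ hθ
  obtain ⟨hθ0, hθT⟩ := hθ
  have hFeq : ∀ τ : ℝ, NormedSpace.exp (τ • Aᵀ) = (NormedSpace.exp (τ • A))ᵀ := fun τ => by
    rw [← Matrix.transpose_smul, Matrix.exp_transpose]
  rw [hFeq]
  set E : ℝ → Matrix (Fin n) (Fin n) ℝ := fun τ => NormedSpace.exp (τ • A) with hE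
  have hEd : ∀ t : ℝ, HasDerivAt E (A * E t) t := fun t =>
    aux_hasDerivAt_matrix.2 fun i j => aux_expEntryDeriv A t i j
  set Φ : ℝ → Matrix (Fin n) (Fin n) ℝ := fun τ => E τ * S τ * (E τ)ᵀ with hΦdef
  have hΦ : ∀ t ∈ Icc (0 : ℝ) T,
      HasDerivAt Φ (E t * (S' t + A * S t + S t * Aᵀ) * (E t)ᵀ) t := by
    intro t ht
    have h1 := (aux_matMul (aux_matMul (hEd t) (hderiv t ht)) (aux_transpose (hEd t)))
    convert h1 using 1
    have hcomm : A * E t = E t * A := aux_expComm A t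
    rw [hcomm]
    rw [Matrix.transpose_mul]
    noncomm_ring
  -- the quadratic-form function
  have hmemsub : Icc (0 : ℝ) θ ⊆ Icc (0 : ℝ) T := Icc_subset_Icc le_rfl hθT
  refine Matrix.posSemidef_iff_dotProduct_mulVec.2 ⟨?_, ?_⟩
  · -- Hermitian
    have h1 : (S 0).IsHermitian := hsymm 0 ⟨le_rfl, hT⟩
    have hct : (E θ)ᵀ = (E θ)ᴴ := (Matrix.conjTranspose_eq_transpose_of_trivial _).symm
    have h2 : (E θ * S θ * (E θ)ᵀ).IsHermitian := by
      rw [hct]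
      exact Matrix.isHermitian_mul_mul_conjTranspose _ (hsymm θ ⟨hθ0, hθT⟩)
    exact h1.sub h2
  · intro x
    have hstar : star x = x := by
      funext i; simp
    set g : ℝ → ℝ := fun τ => x ⬝ᵥ (Φ τ) *ᵥ x with hg
    have hgd : ∀ t ∈ Icc (0 : ℝ) T,
        HasDerivAt g (x ⬝ᵥ (E t * (S' t + A * S t + S t * Aᵀ) * (E t)ᵀ) *ᵥ x) t :=
      fun t ht => aux_quad (hΦ t ht) x
    -- derivative nonpositive on [0, T]
    have hnonpos : ∀ t ∈ Icc (0 : ℝ) T,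
        x ⬝ᵥ (E t * (S' t + A * S t + S t * Aᵀ) * (E t)ᵀ) *ᵥ x ≤ 0 := by
      intro t ht
      set y : Fin n → ℝ := (E t)ᵀ *ᵥ x with hy
      have hrw : x ⬝ᵥ (E t * (S' t + A * S t + S t * Aᵀ) * (E t)ᵀ) *ᵥ x
          = y ⬝ᵥ (S' t + A * S t + S t * Aᵀ) *ᵥ y := by
        rw [← Matrix.mulVec_mulVec, ← Matrix.mulVec_mulVec, dotProduct_mulVec x (E t),
          hy, Matrix.mulVec_transpose]
      rw [hrw]
      have hpsd := (hLMI t ht).dotProduct_mulVec_nonneg y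
      have hsy : star y = y := by funext i; simp
      rw [hsy, Matrix.neg_mulVec, dotProduct_neg] at hpsd
      have : y ⬝ᵥ (S' t + S t * Aᵀ + A * S t) *ᵥ y ≤ 0 := by linarith
      have heq : S' t + A * S t + S t * Aᵀ = S' t + S t * Aᵀ + A * S t := by abel
      rw [heq]
      exact this
    -- g is antitone on [0, θ]
    have hcont : ContinuousOn g (Icc 0 θ) := fun t ht =>
      (hgd t (hmemsub ht)).continuousAt.continuousWithinAt
    have hanti : AntitoneOn g (Icc 0 θ) := by
      apply antitoneOn_of_deriv_nonpos (convex_Icc 0 θ) hcont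
      · intro t ht
        rw [interior_Icc] at ht
        exact ((hgd t (hmemsub (Ioo_subset_Icc_self ht))).differentiableAt).differentiableWithinAt
      · intro t ht
        rw [interior_Icc] at ht
        have ht' := hmemsub (Ioo_subset_Icc_self ht)
        rw [(hgd t ht').deriv]
        exact hnonpos t ht'
    have hle : g θ ≤ g 0 := hanti ⟨le_rfl, hθ0⟩ ⟨hθ0, le_rfl⟩ hθ0
    have hg0 : g 0 = x ⬝ᵥ (S 0) *ᵥ x := by
      have hE0 : E 0 = 1 := by
        rw [hE]
        simp only [zero_smul]
        exact exp_zero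
      simp only [hg, hΦdef, hE0, Matrix.transpose_one, Matrix.mul_one, Matrix.one_mul]
    rw [hstar, Matrix.sub_mulVec, dotProduct_sub]
    have : g θ = x ⬝ᵥ (E θ * S θ * (E θ)ᵀ) *ᵥ x := rfl
    linarith [hle, hg0.symm, this]
end

section
/- Let P₁,…,P_N be positive definite symmetric n×n matrices, Π ∈ ℝ^{N×N} be entrywise nonnegative with columns summing to one (1ᵀΠ = 1ᵀ), and G₁,…,G_N ∈ ℝ^{n×n}. Suppose Gᵢᵀ(Σⱼ π_{ji} P_j)Gᵢ - P_i ≺ 0 for all i. Define V(x) = minᵢ xᵀP_i x. Then for every x ≠ 0, choosing σ(x) = argminᵢ xᵀP_i x and any index i with x in the region where V(x) = xᵀP_i x, one has V(G_i x) < V(x). -/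
open Matrix Set

/-- One-step decrease of the min-of-quadratics Lyapunov function under the
discrete-time Lyapunov–Metzler condition. -/
theorem stmt3 {n N : ℕ} [NeZero N]
    (P : Fin N → Matrix (Fin n) (Fin n) ℝ)
    (hP : ∀ i, (P i).PosDef)
    (Pm : Matrix (Fin N) (Fin N) ℝ)
    (hPmnonneg : ∀ j i, 0 ≤ Pm j i)
    (hPmcol : ∀ i, (∑ j, Pm j i) = 1)
    (G : Fin N → Matrix (Fin n) (Fin n) ℝ)
    (hLM : ∀ i, (P i - (G i)ᵀ * (∑ j, Pm j i • P j) * G i).PosDef)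
    (V : (Fin n → ℝ) → ℝ)
    (hV : ∀ x, V x = ⨅ i : Fin N, x ⬝ᵥ (P i *ᵥ x)) :
    ∀ x : Fin n → ℝ, x ≠ 0 → ∀ i : Fin N,
      V x = x ⬝ᵥ (P i *ᵥ x) → V (G i *ᵥ x) < V x := by
  intro x hx i hVi
  set y := G i *ᵥ x with hy
  have hbdd : BddBelow (Set.range fun j : Fin N => y ⬝ᵥ (P j *ᵥ y)) :=
    (Set.finite_range _).bddBelow
  have h1 : V y ≤ ∑ j, Pm j i * (y ⬝ᵥ (P j *ᵥ y)) := by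
    rw [hV]
    calc (⨅ k : Fin N, y ⬝ᵥ (P k *ᵥ y))
        = (∑ j, Pm j i) * (⨅ k : Fin N, y ⬝ᵥ (P k *ᵥ y)) := by rw [hPmcol i, one_mul]
      _ = ∑ j, Pm j i * (⨅ k : Fin N, y ⬝ᵥ (P k *ᵥ y)) := Finset.sum_mul _ _ _
      _ ≤ ∑ j, Pm j i * (y ⬝ᵥ (P j *ᵥ y)) :=
          Finset.sum_le_sum fun j _ =>
            mul_le_mul_of_nonneg_left (ciInf_le hbdd j) (hPmnonneg j i)
  have h2 : ∑ j, Pm j i * (y ⬝ᵥ (P j *ᵥ y))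
      = x ⬝ᵥ (((G i)ᵀ * (∑ j, Pm j i • P j) * G i) *ᵥ x) := by
    have hsum : (∑ j, Pm j i • P j) *ᵥ y = ∑ j, Pm j i • (P j *ᵥ y) := by
      ext k
      simp only [Matrix.mulVec, dotProduct, Finset.sum_apply, Matrix.sum_apply,
        Matrix.smul_apply, Pi.smul_apply, smul_eq_mul, Finset.sum_mul, Finset.mul_sum]
      rw [Finset.sum_comm]
      exact Finset.sum_congr rfl fun j _ => Finset.sum_congr rfl fun l _ => by ring
    rw [← Matrix.mulVec_mulVec, ← Matrix.mulVec_mulVec, Matrix.dotProduct_mulVec x,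
      Matrix.vecMul_transpose, ← hy, hsum]
    simp only [dotProduct, Finset.sum_apply, Pi.smul_apply, smul_eq_mul, Finset.mul_sum]
    rw [Finset.sum_comm]
    exact Finset.sum_congr rfl fun j _ => Finset.sum_congr rfl fun l _ => by ring
  have h3 : x ⬝ᵥ (((G i)ᵀ * (∑ j, Pm j i • P j) * G i) *ᵥ x) < x ⬝ᵥ (P i *ᵥ x) := by
    have := (hLM i).dotProduct_mulVec_pos hx
    simp only [star_trivial, Matrix.sub_mulVec, dotProduct_sub] at this
    linarith
  rw [hVi]
  exact lt_of_le_of_lt (h1.trans_eq h2) h3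
end

section
/- Let P ∈ S^n be positive definite, S : [0,T_max] → S^n differentiable with -Ṡ(τ) + AᵀS(τ) + S(τ)A ⪯ 0 on [0,T_max], Q ⪯ S(0) for a symmetric matrix Q, and suppose -P + JᵀS(θ)J + εI ⪯ 0 for some ε > 0 and all θ ∈ [T_min,T_max]. Then Jᵀ e^{Aᵀθ} Q e^{Aθ} J - P ≺ 0 for all θ ∈ [T_min,T_max]. -/
section ExpDerivAux
open Matrix
variable {n : ℕ}
attribute [local instance] Matrix.linftyOpNormedAddCommGroup Matrix.linftyOpNormedRing
  Matrix.linftyOpNormedAlgebra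

theorem expEntry_hasDerivAt' (A : Matrix (Fin n) (Fin n) ℝ) (i j : Fin n) (t : ℝ) :
    HasDerivAt (fun τ : ℝ => NormedSpace.exp (τ • A) i j)
      ((A * NormedSpace.exp (t • A)) i j) t := by
  have h := hasDerivAt_exp_smul_const' (𝕂 := ℝ) A t
  let l : Matrix (Fin n) (Fin n) ℝ →ₗ[ℝ] ℝ :=
    { toFun := fun M => M i j, map_add' := fun _ _ => rfl, map_smul' := fun _ _ => rfl }
  exact l.toContinuousLinearMap.hasFDerivAt.comp_hasDerivAt t h

end ExpDerivAux


open Matrix NormedSpace Set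

attribute [local instance] Matrix.normedAddCommGroup Matrix.normedSpace

/-- Implication (b) ⇒ (a) in Theorem 2: the clock-dependent conditions imply
the strict dwell-time condition `Jᵀ e^{Aᵀθ} Q e^{Aθ} J - P ≺ 0` on
`[T_min, T_max]`. -/
theorem stmt5 {n : ℕ} (Tmin Tmax : ℝ) (hT : 0 < Tmin) (hTT : Tmin ≤ Tmax)
    (A J : Matrix (Fin n) (Fin n) ℝ)
    (P : Matrix (Fin n) (Fin n) ℝ) (hP : P.PosDef)
    (S S' : ℝ → Matrix (Fin n) (Fin n) ℝ)
    (hderiv : ∀ τ ∈ Icc (0 : ℝ) Tmax, HasDerivAt S (S' τ) τ)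
    (hsymm : ∀ τ ∈ Icc (0 : ℝ) Tmax, (S τ).IsHermitian)
    (hLMI : ∀ τ ∈ Icc (0 : ℝ) Tmax,
      (-( -(S' τ) + Aᵀ * S τ + S τ * A)).PosSemidef)
    (Q : Matrix (Fin n) (Fin n) ℝ) (hQ : Q.IsHermitian)
    (hQS : (S 0 - Q).PosSemidef)
    (ε : ℝ) (hε : 0 < ε)
    (hSθ : ∀ θ ∈ Icc Tmin Tmax,
      (P - (Jᵀ * S θ * J + ε • (1 : Matrix (Fin n) (Fin n) ℝ))).PosSemidef) :
    ∀ θ ∈ Icc Tmin Tmax,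
      (P - Jᵀ * (NormedSpace.exp (θ • Aᵀ) * Q * NormedSpace.exp (θ • A)) * J).PosDef := by
  intro θ hθ
  have hθ0 : (0 : ℝ) ≤ θ := le_trans hT.le hθ.1
  have hθT : θ ≤ Tmax := hθ.2
  set E : Matrix (Fin n) (Fin n) ℝ := NormedSpace.exp (θ • A) with hE
  have hEt : NormedSpace.exp (θ • Aᵀ) = Eᵀ := by
    rw [hE, ← Matrix.transpose_smul, Matrix.exp_transpose]
  -- key inequality
  have key : ∀ y : Fin n → ℝ,
      (E *ᵥ y) ⬝ᵥ (Q *ᵥ (E *ᵥ y)) ≤ y ⬝ᵥ (S θ *ᵥ y) := by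
    intro y
    set u : ℝ → Fin n → ℝ := fun τ => NormedSpace.exp (τ • A) *ᵥ y with hu_def
    have hu : ∀ t : ℝ, ∀ i, HasDerivAt (fun τ => u τ i) ((A *ᵥ u t) i) t := by
      intro t i
      have h : HasDerivAt (fun τ : ℝ => ∑ j, NormedSpace.exp (τ • A) i j * y j)
          (∑ j, (A * NormedSpace.exp (t • A)) i j * y j) t :=
        HasDerivAt.fun_sum fun j _ => (expEntry_hasDerivAt' A i j t).mul_const (y j)
      have hv : (A *ᵥ u t) i = ∑ j, (A * NormedSpace.exp (t • A)) i j * y j := by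
        simp only [hu_def]
        rw [Matrix.mulVec_mulVec]
        simp [Matrix.mulVec, dotProduct]
      have hf : (fun τ => u τ i) = fun τ : ℝ => ∑ j, NormedSpace.exp (τ • A) i j * y j := by
        funext τ
        simp [hu_def, Matrix.mulVec, dotProduct]
      rw [hv, hf]
      exact h
    have hSij : ∀ τ ∈ Icc (0:ℝ) θ, ∀ i j,
        HasDerivAt (fun t : ℝ => S (θ - t) i j) (-(S' (θ - τ) i j)) τ := by
      intro τ hτ i j
      have hmem : θ - τ ∈ Icc (0:ℝ) Tmax := ⟨by linarith [hτ.2], by linarith [hτ.1]⟩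
      have h1 : HasDerivAt S (S' (θ - τ)) (θ - τ) := hderiv _ hmem
      have h2 : HasDerivAt (fun t => S t i j) (S' (θ - τ) i j) (θ - τ) :=
        hasDerivAt_pi.1 (hasDerivAt_pi.1 h1 i) j
      have hc : HasDerivAt (fun t : ℝ => θ - t) (-1) τ := (hasDerivAt_id τ).const_sub θ
      have := h2.comp τ hc
      simp only [mul_neg, mul_one] at this
      exact this
    set g : ℝ → ℝ := fun τ => u τ ⬝ᵥ (S (θ - τ) *ᵥ u τ) with hg_def
    have hg : ∀ τ ∈ Icc (0:ℝ) θ,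
        HasDerivAt g (u τ ⬝ᵥ ((-(S' (θ - τ)) + Aᵀ * S (θ - τ) + S (θ - τ) * A) *ᵥ u τ)) τ := by
      intro τ hτ
      have hD : HasDerivAt (fun t => ∑ i, ∑ j, u t i * (S (θ - t) i j * u t j))
          (∑ i, ∑ j, ((A *ᵥ u τ) i * (S (θ - τ) i j * u τ j)
            + u τ i * (-(S' (θ - τ) i j) * u τ j + S (θ - τ) i j * (A *ᵥ u τ) j))) τ :=
        HasDerivAt.fun_sum fun i _ => HasDerivAt.fun_sum fun j _ =>
          (hu τ i).mul ((hSij τ hτ i j).mul (hu τ j))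
      have hfun : g = fun t => ∑ i, ∑ j, u t i * (S (θ - t) i j * u t j) := by
        funext t
        simp [hg_def, dotProduct, Matrix.mulVec, Finset.mul_sum]
      have hval : u τ ⬝ᵥ ((-(S' (θ - τ)) + Aᵀ * S (θ - τ) + S (θ - τ) * A) *ᵥ u τ)
          = ∑ i, ∑ j, ((A *ᵥ u τ) i * (S (θ - τ) i j * u τ j)
            + u τ i * (-(S' (θ - τ) i j) * u τ j + S (θ - τ) i j * (A *ᵥ u τ) j)) := by
        have e1 : u τ ⬝ᵥ ((-(S' (θ - τ)) + Aᵀ * S (θ - τ) + S (θ - τ) * A) *ᵥ u τ)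
            = (A *ᵥ u τ) ⬝ᵥ (S (θ - τ) *ᵥ u τ)
              + (u τ ⬝ᵥ ((-(S' (θ - τ))) *ᵥ u τ) + u τ ⬝ᵥ (S (θ - τ) *ᵥ (A *ᵥ u τ))) := by
          simp only [Matrix.add_mulVec, dotProduct_add, ← Matrix.mulVec_mulVec]
          rw [Matrix.dotProduct_mulVec (v := u τ) (A := Aᵀ), Matrix.vecMul_transpose]
          ring
        rw [e1]
        generalize (A *ᵥ u τ) = v
        simp only [dotProduct, Matrix.mulVec, Finset.mul_sum,
          Finset.sum_add_distrib, Matrix.neg_apply, neg_mul, mul_neg,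
          Finset.sum_neg_distrib, mul_add]
      rw [hfun, hval]
      exact hD
    have hanti : AntitoneOn g (Icc 0 θ) := by
      apply antitoneOn_of_deriv_nonpos (convex_Icc 0 θ)
      · exact fun t ht => (hg t ht).continuousAt.continuousWithinAt
      · rw [interior_Icc]
        exact fun t ht => ((hg t (Ioo_subset_Icc_self ht)).differentiableAt).differentiableWithinAt
      · intro t ht
        rw [interior_Icc] at ht
        rw [(hg t (Ioo_subset_Icc_self ht)).deriv]
        have hmem : θ - t ∈ Icc (0:ℝ) Tmax := ⟨by linarith [ht.2], by linarith [ht.1]⟩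
        have h := (hLMI (θ - t) hmem).dotProduct_mulVec_nonneg (u t)
        simp only [Matrix.neg_mulVec, dotProduct_neg, star_trivial] at h
        linarith
    have hle : g θ ≤ g 0 := hanti ⟨le_refl 0, hθ0⟩ ⟨hθ0, le_refl θ⟩ hθ0
    have hg0 : g 0 = y ⬝ᵥ (S θ *ᵥ y) := by
      simp [hg_def, hu_def, exp_zero, Matrix.one_mulVec]
    have hgθ : g θ = (E *ᵥ y) ⬝ᵥ (S 0 *ᵥ (E *ᵥ y)) := by
      simp [hg_def, hu_def, hE]
    have hQle : (E *ᵥ y) ⬝ᵥ (Q *ᵥ (E *ᵥ y)) ≤ (E *ᵥ y) ⬝ᵥ (S 0 *ᵥ (E *ᵥ y)) := by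
      have h := hQS.dotProduct_mulVec_nonneg (E *ᵥ y)
      simp only [Matrix.sub_mulVec, dotProduct_sub, star_trivial] at h
      linarith
    rw [hg0, hgθ] at hle
    linarith
  rw [hEt]
  refine posDef_iff_dotProduct_mulVec.2 ⟨?_, ?_⟩
  · have h1 : ((E * J)ᴴ * Q * (E * J)).IsHermitian :=
      Matrix.isHermitian_conjTranspose_mul_mul (E * J) hQ
    have hct : (E * J)ᴴ = (E * J)ᵀ := by
      ext i j; simp [Matrix.conjTranspose_apply]
    rw [hct, Matrix.transpose_mul] at h1
    have h2 : Jᵀ * (Eᵀ * Q * E) * J = Jᵀ * Eᵀ * Q * (E * J) := by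
      simp only [Matrix.mul_assoc]
    exact hP.1.sub (h2 ▸ h1)
  · intro x hx
    have h1 := (hSθ θ hθ).dotProduct_mulVec_nonneg x
    simp only [Matrix.sub_mulVec, Matrix.add_mulVec, dotProduct_sub,
      dotProduct_add, Matrix.smul_mulVec, Matrix.one_mulVec,
      dotProduct_smul, smul_eq_mul, star_trivial] at h1
    have h2 : x ⬝ᵥ ((Jᵀ * S θ * J) *ᵥ x) = (J *ᵥ x) ⬝ᵥ (S θ *ᵥ (J *ᵥ x)) := by
      rw [← Matrix.mulVec_mulVec, ← Matrix.mulVec_mulVec,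
        Matrix.dotProduct_mulVec (v := x) (A := Jᵀ), Matrix.vecMul_transpose]
    have h3 : x ⬝ᵥ ((Jᵀ * (Eᵀ * Q * E) * J) *ᵥ x)
        = (E *ᵥ (J *ᵥ x)) ⬝ᵥ (Q *ᵥ (E *ᵥ (J *ᵥ x))) := by
      rw [← Matrix.mulVec_mulVec, ← Matrix.mulVec_mulVec,
        Matrix.dotProduct_mulVec (v := x) (A := Jᵀ), Matrix.vecMul_transpose,
        ← Matrix.mulVec_mulVec, ← Matrix.mulVec_mulVec,
        Matrix.dotProduct_mulVec (A := Eᵀ), Matrix.vecMul_transpose]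
    have h4 := key (J *ᵥ x)
    have h5 : 0 < x ⬝ᵥ x := by
      rcases lt_or_eq_of_le (Finset.sum_nonneg fun i _ => mul_self_nonneg (x i)) with h | h
      · exact h
      · exact absurd (dotProduct_self_eq_zero.1 h.symm) hx
    have h6 : 0 < ε * (x ⬝ᵥ x) := mul_pos hε h5
    simp only [Matrix.sub_mulVec, dotProduct_sub, star_trivial]
    rw [h3]
    rw [h2] at h1
    linarith
end

section
/- Let P₁,…,P_N ∈ S^n be positive definite and G₁,…,G_N ∈ ℝ^{n×n}, and suppose for each θ in a compact set Θ and each i, G_i(θ)ᵀ(Σⱼ π_{ji}P_j)G_i(θ) - P_i ≺ 0, where G_i(θ) = e^{Aθ}J_i depends continuously on θ. Then there exists ρ ∈ (0,1) such that for every θ ∈ Θ, every x ∈ ℝ^n, and i = argmin_j xᵀP_jx: min_j (G_i(θ)x)ᵀ P_j (G_i(θ)x) ≤ ρ · xᵀ P_i x. -/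
open Matrix NormedSpace Set

private lemma contExpAux {n : ℕ} (A : Matrix (Fin n) (Fin n) ℝ) :
    Continuous fun θ : ℝ => NormedSpace.exp (θ • A) := by
  letI : NormedRing (Matrix (Fin n) (Fin n) ℝ) := Matrix.linftyOpNormedRing
  letI : NormedAlgebra ℝ (Matrix (Fin n) (Fin n) ℝ) := Matrix.linftyOpNormedAlgebra
  letI : NormedAlgebra ℚ (Matrix (Fin n) (Fin n) ℝ) := NormedAlgebra.restrictScalars ℚ ℝ _
  exact exp_continuous.comp (continuous_id.smul continuous_const)

private lemma quad_smul {n : ℕ} (M : Matrix (Fin n) (Fin n) ℝ) (c : ℝ) (x : Fin n → ℝ) :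
    (c • x) ⬝ᵥ (M *ᵥ (c • x)) = c ^ 2 * (x ⬝ᵥ (M *ᵥ x)) := by
  rw [Matrix.mulVec_smul, dotProduct_smul, smul_dotProduct]
  ring_nf

/-- Uniform contraction factor: by compactness of `Θ = [T_min,T_max]`, the
strict Lyapunov–Metzler inequality yields a uniform `ρ < 1` such that the
min-of-quadratics value contracts by factor `ρ` per jump, uniformly in the
dwell time `θ ∈ Θ`. -/
theorem stmt14 {n N : ℕ} [NeZero N]
    (Tmin Tmax : ℝ) (hTT : Tmin ≤ Tmax)
    (A : Matrix (Fin n) (Fin n) ℝ)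
    (J : Fin N → Matrix (Fin n) (Fin n) ℝ)
    (P : Fin N → Matrix (Fin n) (Fin n) ℝ)
    (hP : ∀ i, (P i).PosDef)
    (Pm : Matrix (Fin N) (Fin N) ℝ)
    (hPmnonneg : ∀ j i, 0 ≤ Pm j i)
    (hPmcol : ∀ i, (∑ j, Pm j i) = 1)
    (hLM : ∀ i, ∀ θ ∈ Icc Tmin Tmax,
      (P i - (NormedSpace.exp (θ • A) * J i)ᵀ * (∑ j, Pm j i • P j) *
        (NormedSpace.exp (θ • A) * J i)).PosDef) :
    ∃ ρ : ℝ, 0 < ρ ∧ ρ < 1 ∧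
      ∀ θ ∈ Icc Tmin Tmax, ∀ x : Fin n → ℝ, ∀ i : Fin N,
        (∀ j, x ⬝ᵥ (P i *ᵥ x) ≤ x ⬝ᵥ (P j *ᵥ x)) →
        (⨅ j : Fin N, ((NormedSpace.exp (θ • A) * J i) *ᵥ x) ⬝ᵥ (P j *ᵥ ((NormedSpace.exp (θ • A) * J i) *ᵥ x))) ≤
          ρ * (x ⬝ᵥ (P i *ᵥ x)) := by
  classical
  -- notation
  set G : ℝ → Fin N → Matrix (Fin n) (Fin n) ℝ := fun θ i => NormedSpace.exp (θ • A) * J i with hG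
  set Q : Fin N → Matrix (Fin n) (Fin n) ℝ := fun i => ∑ j, Pm j i • P j with hQ
  -- key algebraic fact: ⨅ j, yᵀ P_j y ≤ yᵀ Q_i y
  have hinf_le : ∀ (i : Fin N) (y : Fin n → ℝ),
      (⨅ j : Fin N, y ⬝ᵥ (P j *ᵥ y)) ≤ y ⬝ᵥ (Q i *ᵥ y) := by
    intro i y
    have h1 : y ⬝ᵥ (Q i *ᵥ y) = ∑ j, Pm j i * (y ⬝ᵥ (P j *ᵥ y)) := by
      have hmv : Q i *ᵥ y = ∑ j, Pm j i • (P j *ᵥ y) := by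
        simp only [hQ]
        rw [show (∑ j, Pm j i • P j) *ᵥ y = ∑ j, (Pm j i • P j) *ᵥ y from
          map_sum (Matrix.mulVec.addMonoidHomLeft y) _ _]
        simp [Matrix.smul_mulVec]
      rw [hmv]
      simp only [dotProduct, Finset.sum_apply, Pi.smul_apply, smul_eq_mul, Finset.mul_sum]
      rw [Finset.sum_comm]
      exact Finset.sum_congr rfl fun j _ => Finset.sum_congr rfl fun k _ => by ring
    rw [h1]
    have h2 : (⨅ j : Fin N, y ⬝ᵥ (P j *ᵥ y)) = ∑ j, Pm j i * (⨅ j : Fin N, y ⬝ᵥ (P j *ᵥ y)) := by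
      rw [← Finset.sum_mul, hPmcol, one_mul]
    rw [h2]
    refine Finset.sum_le_sum fun j _ => ?_
    exact mul_le_mul_of_nonneg_left (ciInf_le (Finite.bddBelow_range _) j) (hPmnonneg j i)
  -- rewrite x ⬝ᵥ (GᵀQG *ᵥ x) as quadratic of G *ᵥ x
  have hquad : ∀ (θ : ℝ) (i : Fin N) (x : Fin n → ℝ),
      x ⬝ᵥ (((G θ i)ᵀ * Q i * (G θ i)) *ᵥ x)
        = ((G θ i) *ᵥ x) ⬝ᵥ (Q i *ᵥ ((G θ i) *ᵥ x)) := by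
    intro θ i x
    rw [← Matrix.mulVec_mulVec, ← Matrix.mulVec_mulVec, Matrix.dotProduct_mulVec,
      Matrix.vecMul_transpose]
  rcases Nat.eq_zero_or_pos n with hn | hn
  · -- trivial case n = 0
    refine ⟨1/2, by norm_num, by norm_num, ?_⟩
    intro θ _ x i _
    subst hn
    have hz : ∀ (M : Matrix (Fin 0) (Fin 0) ℝ) (y : Fin 0 → ℝ), y ⬝ᵥ (M *ᵥ y) = 0 := by
      intro M y; simp [dotProduct]
    simp [hz]
  -- main case
  haveI : NeZero n := ⟨hn.ne'⟩
  -- the compact set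
  set S : Set (Fin n → ℝ) := Metric.sphere 0 1 with hS
  have hSc : IsCompact S := isCompact_sphere 0 1
  have hSne : S.Nonempty := NormedSpace.sphere_nonempty.2 zero_le_one
  set K : Set (ℝ × (Fin n → ℝ)) := (Icc Tmin Tmax) ×ˢ S with hK
  have hKc : IsCompact K := (isCompact_Icc).prod hSc
  have hKne : K.Nonempty := (nonempty_Icc.2 hTT).prod hSne
  -- continuity of the gap quadratic form
  have hcont : ∀ i : Fin N, Continuous fun p : ℝ × (Fin n → ℝ) =>
      p.2 ⬝ᵥ ((P i - (G p.1 i)ᵀ * Q i * (G p.1 i)) *ᵥ p.2) := by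
    intro i
    have hGc : Continuous fun p : ℝ × (Fin n → ℝ) => G p.1 i :=
      ((contExpAux A).comp continuous_fst).matrix_mul continuous_const
    have hMc : Continuous fun p : ℝ × (Fin n → ℝ) =>
        P i - (G p.1 i)ᵀ * Q i * (G p.1 i) :=
      continuous_const.sub ((hGc.matrix_transpose.matrix_mul continuous_const).matrix_mul hGc)
    exact continuous_snd.dotProduct (hMc.matrix_mulVec continuous_snd)
  -- minimum of the gap on K
  have hcmin : ∀ i : Fin N, ∃ c : ℝ, 0 < c ∧ ∀ p ∈ K,
      c ≤ p.2 ⬝ᵥ ((P i - (G p.1 i)ᵀ * Q i * (G p.1 i)) *ᵥ p.2) := by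
    intro i
    obtain ⟨p₀, hp₀K, hp₀⟩ := hKc.exists_isMinOn hKne (hcont i).continuousOn
    refine ⟨_, ?_, fun p hp => hp₀ hp⟩
    have hx0 : p₀.2 ≠ 0 := by
      have : ‖p₀.2‖ = 1 := mem_sphere_zero_iff_norm.1 hp₀K.2
      intro h; rw [h] at this; simp at this
    exact (hLM i p₀.1 hp₀K.1).dotProduct_mulVec_pos hx0
  choose c hc0 hcle using hcmin
  -- maximum of xᵀ P_i x on the sphere
  have hdmax : ∀ i : Fin N, ∃ d : ℝ, 0 < d ∧ ∀ x ∈ S, x ⬝ᵥ (P i *ᵥ x) ≤ d := by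
    intro i
    have hc : Continuous fun x : Fin n → ℝ => x ⬝ᵥ (P i *ᵥ x) :=
      continuous_id.dotProduct (continuous_const.matrix_mulVec continuous_id)
    obtain ⟨x₀, hx₀S, hx₀⟩ := hSc.exists_isMaxOn hSne hc.continuousOn
    refine ⟨_, ?_, fun x hx => hx₀ hx⟩
    have hx0 : x₀ ≠ 0 := by
      have : ‖x₀‖ = 1 := mem_sphere_zero_iff_norm.1 hx₀S
      intro h; rw [h] at this; simp at this
    exact (hP i).dotProduct_mulVec_pos hx0
  choose d hd0 hdle using hdmax
  -- the contraction factor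
  set ρ : ℝ := max (1/2) (Finset.univ.sup' Finset.univ_nonempty fun i : Fin N => 1 - c i / d i)
    with hρ
  have hρpos : 0 < ρ := lt_of_lt_of_le (by norm_num) (le_max_left _ _)
  have hρlt : ρ < 1 := by
    refine max_lt (by norm_num) ?_
    refine (Finset.sup'_lt_iff _).2 fun i _ => ?_
    have : 0 < c i / d i := div_pos (hc0 i) (hd0 i)
    linarith
  have hρge : ∀ i, 1 - c i / d i ≤ ρ := fun i =>
    le_trans (Finset.le_sup' (fun i => 1 - c i / d i) (Finset.mem_univ i)) (le_max_right _ _)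
  refine ⟨ρ, hρpos, hρlt, ?_⟩
  intro θ hθ x i _
  -- reduce to the quadratic form with Q
  refine le_trans (hinf_le i ((G θ i) *ᵥ x)) ?_
  rw [← hquad]
  -- now show xᵀ GᵀQG x ≤ ρ xᵀ P_i x
  rcases eq_or_ne x 0 with rfl | hx
  · simp
  · set u : Fin n → ℝ := ‖x‖⁻¹ • x with hu
    have hxnorm : (0:ℝ) < ‖x‖ := norm_pos_iff.2 hx
    have huS : u ∈ S := by
      rw [hS, mem_sphere_zero_iff_norm, hu, norm_smul, norm_inv, norm_norm,
        inv_mul_cancel₀ hxnorm.ne']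
    have hxu : x = ‖x‖ • u := by
      rw [hu, smul_smul, mul_inv_cancel₀ hxnorm.ne', one_smul]
    have hgap : c i ≤ u ⬝ᵥ ((P i - (G θ i)ᵀ * Q i * (G θ i)) *ᵥ u) :=
      hcle i (θ, u) ⟨hθ, huS⟩
    have hsplit : u ⬝ᵥ ((P i - (G θ i)ᵀ * Q i * (G θ i)) *ᵥ u)
        = u ⬝ᵥ (P i *ᵥ u) - u ⬝ᵥ (((G θ i)ᵀ * Q i * (G θ i)) *ᵥ u) := by
      rw [Matrix.sub_mulVec, dotProduct_sub]
    have hbound : u ⬝ᵥ (P i *ᵥ u) ≤ d i := hdle i u huS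
    have hupos : 0 ≤ u ⬝ᵥ (P i *ᵥ u) := by
      rcases eq_or_ne u 0 with h | h
      · simp [h]
      · exact le_of_lt ((hP i).dotProduct_mulVec_pos h)
    have hkey : u ⬝ᵥ (((G θ i)ᵀ * Q i * (G θ i)) *ᵥ u) ≤ ρ * (u ⬝ᵥ (P i *ᵥ u)) := by
      have h1 : u ⬝ᵥ (((G θ i)ᵀ * Q i * (G θ i)) *ᵥ u) ≤ u ⬝ᵥ (P i *ᵥ u) - c i := by
        rw [hsplit] at hgap; linarith
      have h2 : c i / d i * (u ⬝ᵥ (P i *ᵥ u)) ≤ c i := by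
        rw [div_mul_eq_mul_div, div_le_iff₀ (hd0 i)]
        exact mul_le_mul_of_nonneg_left hbound (le_of_lt (hc0 i))
      have h3 : (1 - c i / d i) * (u ⬝ᵥ (P i *ᵥ u)) ≤ ρ * (u ⬝ᵥ (P i *ᵥ u)) :=
        mul_le_mul_of_nonneg_right (hρge i) hupos
      nlinarith [h2, h3]
    have hscale : ∀ M : Matrix (Fin n) (Fin n) ℝ,
        x ⬝ᵥ (M *ᵥ x) = ‖x‖ ^ 2 * (u ⬝ᵥ (M *ᵥ u)) := by
      intro M
      have h := quad_smul M ‖x‖ u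
      rw [← hxu] at h
      exact h
    calc x ⬝ᵥ (((G θ i)ᵀ * Q i * (G θ i)) *ᵥ x)
        = ‖x‖ ^ 2 * (u ⬝ᵥ (((G θ i)ᵀ * Q i * (G θ i)) *ᵥ u)) := hscale _
      _ ≤ ‖x‖ ^ 2 * (ρ * (u ⬝ᵥ (P i *ᵥ u))) :=
          mul_le_mul_of_nonneg_left hkey (by positivity)
      _ = ρ * (‖x‖ ^ 2 * (u ⬝ᵥ (P i *ᵥ u))) := by ring
      _ = ρ * (x ⬝ᵥ (P i *ᵥ x)) := by rw [← hscale]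
end
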